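/- For every subset S of at most two vertices of SP_9 and every function f : S → {+,−}, there exists a vertex z of SP_9, not in S, such that for each u ∈ S the edge uz has sign f(u). -/
import Mathlib


/-- Vertices of `SP_9`, identified with `{0,1,2} × {0,1,2}`. -/
abbrev V9 : Type := Fin 3 × Fin 3

/-- The edge `uv` of `SP_9` is positive: `u ≠ v` and they agree in exactly one coordinate. -/
abbrev pos9 (u v : V9) : Prop :=
  (u.1 = v.1 ∧ u.2 ≠ v.2) ∨ (u.1 ≠ v.1 ∧ u.2 = v.2)

/-- The edge `uv` of `SP_9` is negative: `u ≠ v` and it is not positive. -/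
abbrev neg9 (u v : V9) : Prop := u ≠ v ∧ ¬ pos9 u v

lemma sp9_one : ∀ (a : V9) (sa : Bool), ∃ z : V9, z ≠ a ∧
    (if sa then pos9 a z else neg9 a z) := by decide

set_option maxHeartbeats 1000000 in
set_option synthInstance.maxSize 400 in
set_option synthInstance.maxHeartbeats 400000 in
lemma sp9_two : ∀ (a b : V9) (sa sb : Bool), a = b ∨ ∃ z : V9, z ≠ a ∧ z ≠ b ∧
    (if sa then pos9 a z else neg9 a z) ∧ (if sb then pos9 b z else neg9 b z) := by decide

/-- Property `P_{2,1}`: for every set `S` of at most two vertices of `SP_9` and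
every prescription `f` of signs (`true` = positive) on `S`, there is a vertex
`z ∉ S` joined to each `u ∈ S` by an edge of the prescribed sign. -/
theorem sp9_property_P21 :
    ∀ S : Finset V9, S.card ≤ 2 → ∀ f : V9 → Bool,
      ∃ z : V9, z ∉ S ∧ ∀ u ∈ S, if f u then pos9 u z else neg9 u z := by
  intro S hS f
  interval_cases h : S.card
  · rw [Finset.card_eq_zero] at h
    subst h
    exact ⟨(0,0), by simp, by simp⟩
  · rw [Finset.card_eq_one] at h
    obtain ⟨a, rfl⟩ := h
    obtain ⟨z, hza, hz⟩ := sp9_one a (f a)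
    exact ⟨z, by simpa using hza, by simpa using hz⟩
  · rw [Finset.card_eq_two] at h
    obtain ⟨a, b, hab, rfl⟩ := h
    obtain ⟨z, hza, hzb, ha, hb⟩ := (sp9_two a b (f a) (f b)).resolve_left hab
    refine ⟨z, by simp [hza, hzb], ?_⟩
    intro u hu
    rcases Finset.mem_insert.mp hu with rfl | hu
    · exact ha
    · rw [Finset.mem_singleton] at hu; subst hu; exact hb
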